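/- Let α > 0 and c₁, c₂ ≥ 0 be real numbers. For every real T ≥ 1, setting Γ = min{T^{4α/7}, T} (real powers), one has c₁ · T · Γ^{−3/4} + c₂ · T^{−α} · T · Γ ≤ (c₁ + c₂) · T^{max{1 − (3/7)·α, 1/4}}. -/
import Mathlib


open Real

/-- algebraic core of Theorem 2 of the paper: for α > 0, c₁, c₂ ≥ 0,
T ≥ 1 and Γ = min{T^{4α/7}, T},
c₁·T·Γ^{−3/4} + c₂·T^{−α}·T·Γ ≤ (c₁ + c₂)·T^{max{1 − (3/7)α, 1/4}}. -/
theorem stmt_15 (α c₁ c₂ : ℝ) (hα : 0 < α) (hc₁ : 0 ≤ c₁) (hc₂ : 0 ≤ c₂)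
    (T : ℝ) (hT : 1 ≤ T) (Γ : ℝ) (hΓ : Γ = min (T ^ (4 * α / 7)) T) :
    c₁ * T * Γ ^ (-(3 : ℝ) / 4) + c₂ * T ^ (-α) * T * Γ ≤
      (c₁ + c₂) * T ^ max (1 - (3 / 7) * α) (1 / 4 : ℝ) := by
  have hT0 : (0 : ℝ) < T := lt_of_lt_of_le one_pos hT
  set M : ℝ := max (1 - (3 / 7) * α) (1 / 4 : ℝ) with hM
  -- Γ = T ^ min (4α/7) 1
  have hΓ' : Γ = T ^ min (4 * α / 7) (1 : ℝ) := by
    rcases le_total (4 * α / 7) (1 : ℝ) with h | h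
    · rw [hΓ, min_eq_left h, min_eq_left]
      calc T ^ (4 * α / 7) ≤ T ^ (1 : ℝ) :=
            Real.rpow_le_rpow_of_exponent_le hT h
        _ = T := Real.rpow_one T
    · rw [hΓ, min_eq_right h, min_eq_right, Real.rpow_one]
      calc T = T ^ (1 : ℝ) := (Real.rpow_one T).symm
        _ ≤ T ^ (4 * α / 7) := Real.rpow_le_rpow_of_exponent_le hT h
  set m : ℝ := min (4 * α / 7) (1 : ℝ) with hm
  have h1 : c₁ * T * Γ ^ (-(3 : ℝ) / 4) = c₁ * T ^ (1 + m * (-(3 : ℝ) / 4)) := by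
    rw [hΓ', ← Real.rpow_mul hT0.le, Real.rpow_add hT0, Real.rpow_one]
    ring
  have h2 : c₂ * T ^ (-α) * T * Γ = c₂ * T ^ (-α + 1 + m) := by
    rw [hΓ', Real.rpow_add hT0, Real.rpow_add hT0, Real.rpow_one]
    ring
  have he1 : 1 + m * (-(3 : ℝ) / 4) ≤ M := by
    rcases le_total (4 * α / 7) (1 : ℝ) with h | h
    · rw [hm, min_eq_left h]
      exact le_max_of_le_left (by ring_nf; linarith)
    · rw [hm, min_eq_right h]
      exact le_max_of_le_right (by norm_num)
  have he2 : -α + 1 + m ≤ M := by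
    rcases le_total (4 * α / 7) (1 : ℝ) with h | h
    · rw [hm, min_eq_left h]
      exact le_max_of_le_left (by linarith)
    · rw [hm, min_eq_right h]
      exact le_max_of_le_right (by linarith)
  have k1 : T ^ (1 + m * (-(3 : ℝ) / 4)) ≤ T ^ M :=
    Real.rpow_le_rpow_of_exponent_le hT he1
  have k2 : T ^ (-α + 1 + m) ≤ T ^ M :=
    Real.rpow_le_rpow_of_exponent_le hT he2
  calc c₁ * T * Γ ^ (-(3 : ℝ) / 4) + c₂ * T ^ (-α) * T * Γ
      = c₁ * T ^ (1 + m * (-(3 : ℝ) / 4)) + c₂ * T ^ (-α + 1 + m) := by rw [h1, h2]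
    _ ≤ c₁ * T ^ M + c₂ * T ^ M := by
        gcongr
    _ = (c₁ + c₂) * T ^ M := by ring
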